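/- Let S and A be measurable spaces, ν a nonzero finite measure on A, r : S × A → ℝ a bounded measurable function, P a Markov kernel from S × A to S, and γ ∈ [0,1). For a bounded measurable function Q : S × A → ℝ define the soft Bellman Q-operator (T_r Q)(s,a) = r(s,a) + γ ∫_S log( ∫_A exp(Q(s',a')) ν(da') ) P(ds' | (s,a)). Then for all bounded measurable Q₁, Q₂ : S × A → ℝ and all (s,a), |T_r Q₁(s,a) − T_r Q₂(s,a)| ≤ γ · sup_{(s',a')} |Q₁(s',a') − Q₂(s',a')|; that is, T_r is a γ-contraction in the sup metric. -/

import Mathlib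

open MeasureTheory ProbabilityTheory

private lemma log_int_exp_le {A : Type*} [MeasurableSpace A] (ν : Measure A)
    [NeZero ν] {f g : A → ℝ}
    (hf : Integrable (fun a => Real.exp (f a)) ν)
    (hg : Integrable (fun a => Real.exp (g a)) ν)
    (M : ℝ) (h : ∀ a, f a ≤ g a + M) :
    Real.log (∫ a, Real.exp (f a) ∂ν) ≤ Real.log (∫ a, Real.exp (g a) ∂ν) + M := by
  have hfpos : 0 < ∫ a, Real.exp (f a) ∂ν := integral_exp_pos hf
  have hgpos : 0 < ∫ a, Real.exp (g a) ∂ν := integral_exp_pos hg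
  have h1 : ∫ a, Real.exp (f a) ∂ν ≤ Real.exp M * ∫ a, Real.exp (g a) ∂ν := by
    rw [← integral_const_mul]
    refine integral_mono hf (hg.const_mul _) fun a => ?_
    rw [← Real.exp_add]
    exact Real.exp_le_exp.mpr (by linarith [h a])
  calc Real.log (∫ a, Real.exp (f a) ∂ν)
      ≤ Real.log (Real.exp M * ∫ a, Real.exp (g a) ∂ν) := Real.log_le_log hfpos h1
    _ = Real.log (∫ a, Real.exp (g a) ∂ν) + M := by
        rw [Real.log_mul (Real.exp_ne_zero _) hgpos.ne', Real.log_exp, add_comm]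

/-- Claim A.3 (Q-version): the soft Bellman Q-operator
`(T_r Q)(s,a) = r(s,a) + γ ∫_S log( ∫_A exp(Q(s',a')) ν(da') ) P(ds'|(s,a))`
is a `γ`-contraction in the sup metric on bounded measurable functions. -/
theorem soft_bellman_Q_operator_contraction
    {S A : Type*} [MeasurableSpace S] [MeasurableSpace A]
    (ν : Measure A) [IsFiniteMeasure ν] (hν : ν ≠ 0)
    (r : S × A → ℝ) (hrm : Measurable r) (Cr : ℝ) (hrb : ∀ p, |r p| ≤ Cr)
    (P : Kernel (S × A) S) [IsMarkovKernel P]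
    (γ : ℝ) (hγ0 : 0 ≤ γ) (hγ1 : γ < 1)
    (Q₁ Q₂ : S × A → ℝ) (hQ₁m : Measurable Q₁) (hQ₂m : Measurable Q₂)
    (C₁ C₂ : ℝ) (hQ₁b : ∀ p, |Q₁ p| ≤ C₁) (hQ₂b : ∀ p, |Q₂ p| ≤ C₂) :
    ∀ s : S, ∀ a : A,
      |(r (s, a) + γ * ∫ s', Real.log (∫ a', Real.exp (Q₁ (s', a')) ∂ν) ∂(P (s, a))) -
          (r (s, a) + γ * ∫ s', Real.log (∫ a', Real.exp (Q₂ (s', a')) ∂ν) ∂(P (s, a)))| ≤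
        γ * ⨆ p : S × A, |Q₁ p - Q₂ p| := by
  intro s a
  haveI : NeZero ν := ⟨hν⟩
  set M := ⨆ p : S × A, |Q₁ p - Q₂ p| with hM
  have hbdd : BddAbove (Set.range fun p : S × A => |Q₁ p - Q₂ p|) := by
    refine ⟨C₁ + C₂, ?_⟩
    rintro x ⟨p, rfl⟩
    calc |Q₁ p - Q₂ p| ≤ |Q₁ p| + |Q₂ p| := abs_sub _ _
      _ ≤ C₁ + C₂ := add_le_add (hQ₁b p) (hQ₂b p)
  have hMle : ∀ p : S × A, |Q₁ p - Q₂ p| ≤ M := fun p => le_ciSup hbdd p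
  -- integrability of exp ∘ Q over ν for bounded measurable Q
  have hint : ∀ (Q : S × A → ℝ), Measurable Q → ∀ (C : ℝ), (∀ p, |Q p| ≤ C) → ∀ s' : S,
      Integrable (fun a' => Real.exp (Q (s', a'))) ν := by
    intro Q hm C hb s'
    refine Integrable.mono' (integrable_const (Real.exp C)) ?_ ?_
    · exact ((hm.comp measurable_prodMk_left).exp).aestronglyMeasurable
    · filter_upwards with a'
      rw [Real.norm_eq_abs, abs_of_pos (Real.exp_pos _)]
      exact Real.exp_le_exp.mpr (le_trans (le_abs_self _) (hb _))
  have hint₁ := hint Q₁ hQ₁m C₁ hQ₁b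
  have hint₂ := hint Q₂ hQ₂m C₂ hQ₂b
  -- pointwise bound on the log-sum-exp difference
  set f₁ : S → ℝ := fun s' => Real.log (∫ a', Real.exp (Q₁ (s', a')) ∂ν) with hf₁
  set f₂ : S → ℝ := fun s' => Real.log (∫ a', Real.exp (Q₂ (s', a')) ∂ν) with hf₂
  have hkey : ∀ s', |f₁ s' - f₂ s'| ≤ M := by
    intro s'
    rw [abs_sub_le_iff]
    constructor
    · have := log_int_exp_le ν (hint₁ s') (hint₂ s') M
        (fun a' => by have h := abs_le.mp (hMle (s', a')); linarith [h.1, h.2])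
      linarith
    · have := log_int_exp_le ν (hint₂ s') (hint₁ s') M
        (fun a' => by have h := abs_le.mp (hMle (s', a')); linarith [h.1, h.2])
      linarith
  -- boundedness of f₁, f₂
  have hνpos : 0 < (ν Set.univ).toReal := by
    refine ENNReal.toReal_pos ?_ (measure_ne_top ν _)
    simpa [Measure.measure_univ_eq_zero] using hν
  set K := Real.log (ν Set.univ).toReal with hK
  have hfb : ∀ (Q : S × A → ℝ) (hm : Measurable Q) (C : ℝ) (hb : ∀ p, |Q p| ≤ C) (s' : S),
      |Real.log (∫ a', Real.exp (Q (s', a')) ∂ν)| ≤ |K| + C := by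
    intro Q hm C hb s'
    have hi := hint Q hm C hb s'
    have hpos : 0 < ∫ a', Real.exp (Q (s', a')) ∂ν := integral_exp_pos hi
    have hub : ∫ a', Real.exp (Q (s', a')) ∂ν ≤ (ν Set.univ).toReal * Real.exp C := by
      have := integral_mono hi (integrable_const (Real.exp C))
        (fun a' => Real.exp_le_exp.mpr (le_trans (le_abs_self _) (hb _)))
      simpa [smul_eq_mul, measureReal_def] using this
    have hlb : (ν Set.univ).toReal * Real.exp (-C) ≤ ∫ a', Real.exp (Q (s', a')) ∂ν := by
      have := integral_mono (integrable_const (Real.exp (-C))) hi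
        (fun a' => Real.exp_le_exp.mpr (by linarith [neg_abs_le (Q (s', a')), hb (s', a')]))
      simpa [smul_eq_mul, measureReal_def] using this
    have h1 : Real.log (∫ a', Real.exp (Q (s', a')) ∂ν) ≤ K + C := by
      calc Real.log (∫ a', Real.exp (Q (s', a')) ∂ν)
          ≤ Real.log ((ν Set.univ).toReal * Real.exp C) := Real.log_le_log hpos hub
        _ = K + C := by rw [Real.log_mul hνpos.ne' (Real.exp_ne_zero _), Real.log_exp]
    have h2 : K - C ≤ Real.log (∫ a', Real.exp (Q (s', a')) ∂ν) := by
      calc K - C = Real.log ((ν Set.univ).toReal * Real.exp (-C)) := by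
            rw [Real.log_mul hνpos.ne' (Real.exp_ne_zero _), Real.log_exp]; ring
        _ ≤ Real.log (∫ a', Real.exp (Q (s', a')) ∂ν) :=
            Real.log_le_log (by positivity) hlb
    rw [abs_le]
    constructor
    · linarith [neg_abs_le K]
    · linarith [le_abs_self K]
  -- measurability of f₁, f₂
  have hmeas : ∀ (Q : S × A → ℝ), Measurable Q →
      Measurable (fun s' : S => Real.log (∫ a', Real.exp (Q (s', a')) ∂ν)) := by
    intro Q hm
    exact (hm.exp.stronglyMeasurable.integral_prod_right').measurable.log
  -- integrability of f₁, f₂ over P (s, a)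
  have hintf : ∀ (Q : S × A → ℝ) (hm : Measurable Q) (C : ℝ) (hb : ∀ p, |Q p| ≤ C),
      Integrable (fun s' => Real.log (∫ a', Real.exp (Q (s', a')) ∂ν)) (P (s, a)) := by
    intro Q hm C hb
    refine Integrable.mono' (integrable_const (|K| + C)) ((hmeas Q hm).aestronglyMeasurable) ?_
    filter_upwards with s'
    rw [Real.norm_eq_abs]
    exact hfb Q hm C hb s'
  have hi₁ : Integrable f₁ (P (s, a)) := hintf Q₁ hQ₁m C₁ hQ₁b
  have hi₂ : Integrable f₂ (P (s, a)) := hintf Q₂ hQ₂m C₂ hQ₂b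
  have hdiff : (r (s, a) + γ * ∫ s', f₁ s' ∂(P (s, a))) -
      (r (s, a) + γ * ∫ s', f₂ s' ∂(P (s, a))) = γ * ∫ s', (f₁ s' - f₂ s') ∂(P (s, a)) := by
    rw [integral_sub hi₁ hi₂]; ring
  rw [hdiff, abs_mul, abs_of_nonneg hγ0]
  gcongr
  calc |∫ s', (f₁ s' - f₂ s') ∂(P (s, a))| ≤ ∫ s', |f₁ s' - f₂ s'| ∂(P (s, a)) := by
        simpa [Real.norm_eq_abs] using norm_integral_le_integral_norm (fun s' => f₁ s' - f₂ s')
    _ ≤ ∫ _s', M ∂(P (s, a)) :=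
        integral_mono ((hi₁.sub hi₂).abs) (integrable_const M) hkey
    _ = M := by simp
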